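/- Let P be a symmetric real N×N matrix and b a real N×m matrix, and write D^k = bᵀ T_k(P) b and û^k = T_k(P) b. Then for every integer n ≥ 2, D^{2n−1} = 4 · (û^{n−1})ᵀ P (û^{n−1}) − 2 · (û^{n−1})ᵀ û^{n−2} − D^1. -/

import Mathlib

open Matrix Polynomial

/-- Evaluation of the Chebyshev polynomial of the first kind at a square matrix. -/
noncomputable def chebMat {I : Type*} [Fintype I] [DecidableEq I]
    (P : Matrix I I ℝ) (k : ℤ) : Matrix I I ℝ :=
  Polynomial.aeval P (Polynomial.Chebyshev.T ℝ k)

lemma cheb_poly_id (k : ℤ) :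
    Polynomial.Chebyshev.T ℝ (2 * k - 1) =
      4 * X * (Polynomial.Chebyshev.T ℝ (k - 1)) ^ 2 -
        2 * Polynomial.Chebyshev.T ℝ (k - 1) * Polynomial.Chebyshev.T ℝ (k - 2) -
        Polynomial.Chebyshev.T ℝ 1 := by
  have h1 := Polynomial.Chebyshev.T_mul_T ℝ (k - 1) k
  have h2 := Polynomial.Chebyshev.T_add_two ℝ (k - 2)
  have h3 : Polynomial.Chebyshev.T ℝ (-1) = Polynomial.Chebyshev.T ℝ 1 := by
    simpa using Polynomial.Chebyshev.T_neg ℝ 1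
  have hk : k - 2 + 2 = k := by ring
  have hk1 : k - 2 + 1 = k - 1 := by ring
  rw [hk, hk1] at h2
  have hs : k - 1 + k = 2 * k - 1 := by ring
  have hd : k - 1 - k = -1 := by ring
  rw [hs, hd, h3, h2] at h1
  linear_combination -h1

lemma aeval_transpose {I : Type*} [Fintype I] [DecidableEq I]
    (P : Matrix I I ℝ) (p : ℝ[X]) :
    (Polynomial.aeval P p)ᵀ = Polynomial.aeval Pᵀ p := by
  induction p using Polynomial.induction_on' with
  | add p q hp hq => simp [hp, hq]
  | monomial n a =>
      simp only [Polynomial.aeval_monomial, Matrix.transpose_mul, Matrix.transpose_pow]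
      rw [show ((algebraMap ℝ (Matrix I I ℝ)) a) = a • (1 : Matrix I I ℝ) by
        simp [Algebra.algebraMap_eq_smul_one]]
      simp [Matrix.transpose_smul, mul_comm]

lemma chebMat_transpose {I : Type*} [Fintype I] [DecidableEq I]
    (P : Matrix I I ℝ) (hP : P.IsSymm) (k : ℤ) :
    (chebMat P k)ᵀ = chebMat P k := by
  rw [chebMat, aeval_transpose, hP.eq]

theorem stmt16 (N m : ℕ) (P : Matrix (Fin N) (Fin N) ℝ) (hP : P.IsSymm)
    (b : Matrix (Fin N) (Fin m) ℝ) (n : ℕ) (hn : 2 ≤ n) :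
    bᵀ * chebMat P (2 * n - 1) * b =
      (4 : ℝ) • ((chebMat P (n - 1) * b)ᵀ * P * (chebMat P (n - 1) * b)) -
      (2 : ℝ) • ((chebMat P (n - 1) * b)ᵀ * (chebMat P (n - 2) * b)) -
      bᵀ * chebMat P 1 * b := by
  have hx : Polynomial.aeval P (X : ℝ[X]) = P := by simp
  have key : chebMat P (2 * n - 1) =
      (4 : ℝ) • (chebMat P (n - 1) * P * chebMat P (n - 1)) -
        (2 : ℝ) • (chebMat P (n - 1) * chebMat P (n - 2)) - chebMat P 1 := by
    unfold chebMat
    rw [cheb_poly_id (n : ℤ)]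
    have hc : (Polynomial.aeval P (Polynomial.Chebyshev.T ℝ ((n : ℤ) - 1))) * P =
        P * Polynomial.aeval P (Polynomial.Chebyshev.T ℝ ((n : ℤ) - 1)) := by
      have h := congrArg (Polynomial.aeval P)
        (mul_comm (Polynomial.Chebyshev.T ℝ ((n : ℤ) - 1)) (X : ℝ[X]))
      simpa [_root_.map_mul, hx] using h
    simp only [map_sub, _root_.map_mul, map_pow, _root_.map_ofNat, hx, sq]
    rw [Algebra.smul_def, Algebra.smul_def, _root_.map_ofNat, _root_.map_ofNat, hc]
    noncomm_ring
  rw [Matrix.transpose_mul, chebMat_transpose P hP, key]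
  simp only [Matrix.sub_mul, Matrix.mul_sub, Matrix.smul_mul, Matrix.mul_smul, Matrix.mul_assoc]
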